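/- Let m ≥ 2 be an odd integer. The number of quadruples (l1, l2, l3, l4) with (m+1)/2 ≤ l1, l2, l3, l4 ≤ m−1 satisfying both 2·l2 ≡ l1 + l3 (mod m) and 3·l2 ≡ 2·l1 + l4 (mod m) equals m²/12 + O(m), i.e., differs from m²/12 by at most C·m for an absolute constant C. -/

import Mathlib

open Finset

/-- On the box, the two congruences force exact linear equalities. -/
lemma quad_filter_eq (m : ℕ) (N : ℤ) (hN : 1 ≤ N) (hm : (m : ℤ) = 2 * N + 1) :
    (((Finset.Icc (N + 1) (2 * N)) ×ˢ (Finset.Icc (N + 1) (2 * N)) ×ˢ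
        (Finset.Icc (N + 1) (2 * N)) ×ˢ (Finset.Icc (N + 1) (2 * N))).filter
      (fun l : ℤ × ℤ × ℤ × ℤ => 2 * l.2.1 ≡ l.1 + l.2.2.1 [ZMOD (m : ℤ)] ∧
          3 * l.2.1 ≡ 2 * l.1 + l.2.2.2 [ZMOD (m : ℤ)]))
    = (((Finset.Icc (N + 1) (2 * N)) ×ˢ (Finset.Icc (N + 1) (2 * N)) ×ˢ
        (Finset.Icc (N + 1) (2 * N)) ×ˢ (Finset.Icc (N + 1) (2 * N))).filter
      (fun l : ℤ × ℤ × ℤ × ℤ => l.2.2.1 = 2 * l.2.1 - l.1 ∧ l.2.2.2 = 3 * l.2.1 - 2 * l.1)) := by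
  apply Finset.filter_congr
  rintro ⟨l1, l2, l3, l4⟩ hx
  simp only [Finset.mem_product, Finset.mem_Icc] at hx
  obtain ⟨⟨b11, b12⟩, ⟨b21, b22⟩, ⟨b31, b32⟩, ⟨b41, b42⟩⟩ := hx
  dsimp only
  constructor
  · rintro ⟨h1, h2⟩
    obtain ⟨k1, hk1⟩ := Int.modEq_iff_dvd.mp h1
    rw [hm] at hk1
    have hk10 : k1 = 0 := by
      rcases le_or_gt k1 (-1) with h | h
      · exfalso; nlinarith
      rcases le_or_gt 1 k1 with h' | h'
      · exfalso; nlinarith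
      omega
    rw [hk10, mul_zero] at hk1
    have hl3 : l3 = 2 * l2 - l1 := by omega
    obtain ⟨k2, hk2⟩ := Int.modEq_iff_dvd.mp h2
    rw [hm] at hk2
    have hk20 : k2 = 0 := by
      rcases le_or_gt k2 (-1) with h | h
      · exfalso; nlinarith
      rcases le_or_gt 1 k2 with h' | h'
      · exfalso; nlinarith
      omega
    rw [hk20, mul_zero] at hk2
    exact ⟨hl3, by omega⟩
  · rintro ⟨h3, h4⟩
    constructor
    · have : l1 + l3 = 2 * l2 := by omega
      rw [this]
    · have : 2 * l1 + l4 = 3 * l2 := by omega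
      rw [this]

/-- Bijection with pairs (a,c) ∈ [1,N]² such that 3 ∣ 2a+c. -/
lemma quad_card_eq (m : ℕ) (N : ℤ) (hN : 1 ≤ N) (hm : (m : ℤ) = 2 * N + 1) :
    (((Finset.Icc (N + 1) (2 * N)) ×ˢ (Finset.Icc (N + 1) (2 * N)) ×ˢ
        (Finset.Icc (N + 1) (2 * N)) ×ˢ (Finset.Icc (N + 1) (2 * N))).filter
      (fun l : ℤ × ℤ × ℤ × ℤ => l.2.2.1 = 2 * l.2.1 - l.1 ∧ l.2.2.2 = 3 * l.2.1 - 2 * l.1)).card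
    = (((Finset.Icc (1 : ℤ) N) ×ˢ (Finset.Icc (1 : ℤ) N)).filter
        (fun p : ℤ × ℤ => (3 : ℤ) ∣ 2 * p.1 + p.2)).card := by
  apply Finset.card_nbij'
    (i := fun l : ℤ × ℤ × ℤ × ℤ => ((m : ℤ) - l.1, (m : ℤ) - l.2.2.2))
    (j := fun p : ℤ × ℤ =>
      ((m : ℤ) - p.1, ((m : ℤ) - (2 * p.1 + p.2) / 3,
        ((m : ℤ) - (p.1 + 2 * p.2) / 3, (m : ℤ) - p.2))))
  · rintro ⟨l1, l2, l3, l4⟩ hx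
    simp only [Finset.mem_coe, Finset.mem_filter, Finset.mem_product, Finset.mem_Icc] at hx ⊢
    omega
  · rintro ⟨a, c⟩ hp
    simp only [Finset.mem_coe, Finset.mem_filter, Finset.mem_product, Finset.mem_Icc] at hp ⊢
    omega
  · rintro ⟨l1, l2, l3, l4⟩ hx
    simp only [Finset.mem_coe, Finset.mem_filter, Finset.mem_product, Finset.mem_Icc] at hx
    simp only [Prod.mk.injEq]
    refine ⟨by omega, by omega, by omega, by omega⟩
  · rintro ⟨a, c⟩ hp
    simp only [Finset.mem_coe, Finset.mem_filter, Finset.mem_product, Finset.mem_Icc] at hp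
    simp only [Prod.mk.injEq]
    exact ⟨by omega, by omega⟩

/-- Count of c ∈ [1,N] with 3 ∣ 2a+c, up to a bounded error. -/
lemma inner_card_bound (N a : ℤ) (hN : 1 ≤ N) :
    N - 2 ≤ 3 * (((Finset.Icc (1 : ℤ) N).filter (fun c => (3 : ℤ) ∣ 2 * a + c)).card : ℤ) ∧
    3 * (((Finset.Icc (1 : ℤ) N).filter (fun c => (3 : ℤ) ∣ 2 * a + c)).card : ℤ) ≤ N + 2 := by
  have hcard : ((Finset.Icc (1 : ℤ) N).filter (fun c => (3 : ℤ) ∣ 2 * a + c)).card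
      = (Finset.Icc ((2 * a + 3) / 3) ((2 * a + N) / 3)).card := by
    apply Finset.card_nbij' (i := fun c => (2 * a + c) / 3) (j := fun t => 3 * t - 2 * a)
    · intro c hc
      simp only [Finset.mem_coe, Finset.mem_filter, Finset.mem_Icc] at hc ⊢
      omega
    · intro t ht
      simp only [Finset.mem_coe, Finset.mem_filter, Finset.mem_Icc] at ht ⊢
      omega
    · intro c hc
      simp only [Finset.mem_coe, Finset.mem_filter, Finset.mem_Icc] at hc
      dsimp only
      omega
    · intro t ht
      simp only [Finset.mem_coe, Finset.mem_Icc] at ht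
      dsimp only
      omega
  rw [hcard, Int.card_Icc]
  omega

/-- Bounds for the pair count. -/
lemma pair_card_bound (N : ℤ) (hN : 1 ≤ N) :
    N * (N - 2) ≤ 3 * ((((Finset.Icc (1 : ℤ) N) ×ˢ (Finset.Icc (1 : ℤ) N)).filter
        (fun p : ℤ × ℤ => (3 : ℤ) ∣ 2 * p.1 + p.2)).card : ℤ) ∧
    3 * ((((Finset.Icc (1 : ℤ) N) ×ˢ (Finset.Icc (1 : ℤ) N)).filter
        (fun p : ℤ × ℤ => (3 : ℤ) ∣ 2 * p.1 + p.2)).card : ℤ) ≤ N * (N + 2) := by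
  have hsum : ((((Finset.Icc (1 : ℤ) N) ×ˢ (Finset.Icc (1 : ℤ) N)).filter
      (fun p : ℤ × ℤ => (3 : ℤ) ∣ 2 * p.1 + p.2)).card)
      = ∑ a ∈ Finset.Icc (1 : ℤ) N,
          ((Finset.Icc (1 : ℤ) N).filter (fun c => (3 : ℤ) ∣ 2 * a + c)).card := by
    rw [Finset.card_filter, Finset.sum_product]
    push_cast
    exact Finset.sum_congr rfl (fun a _ => (Finset.card_filter _ _).symm)
  have hIcard : ((Finset.Icc (1 : ℤ) N).card : ℤ) = N := by
    rw [Int.card_Icc]; omega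
  rw [hsum]
  push_cast
  constructor
  · calc N * (N - 2) = ∑ _a ∈ Finset.Icc (1 : ℤ) N, (N - 2) := by
          rw [Finset.sum_const, nsmul_eq_mul, hIcard]
      _ ≤ ∑ a ∈ Finset.Icc (1 : ℤ) N,
            3 * (((Finset.Icc (1 : ℤ) N).filter (fun c => (3 : ℤ) ∣ 2 * a + c)).card : ℤ) :=
          Finset.sum_le_sum (fun a _ => (inner_card_bound N a hN).1)
      _ = 3 * ∑ a ∈ Finset.Icc (1 : ℤ) N,
            (((Finset.Icc (1 : ℤ) N).filter (fun c => (3 : ℤ) ∣ 2 * a + c)).card : ℤ) := by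
          rw [Finset.mul_sum]
  · calc 3 * ∑ a ∈ Finset.Icc (1 : ℤ) N,
            (((Finset.Icc (1 : ℤ) N).filter (fun c => (3 : ℤ) ∣ 2 * a + c)).card : ℤ)
        = ∑ a ∈ Finset.Icc (1 : ℤ) N,
            3 * (((Finset.Icc (1 : ℤ) N).filter (fun c => (3 : ℤ) ∣ 2 * a + c)).card : ℤ) := by
          rw [Finset.mul_sum]
      _ ≤ ∑ _a ∈ Finset.Icc (1 : ℤ) N, (N + 2) :=
          Finset.sum_le_sum (fun a _ => (inner_card_bound N a hN).2)
      _ = N * (N + 2) := by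
          rw [Finset.sum_const, nsmul_eq_mul, hIcard]

theorem count_quadruples_two_congruences :
    ∃ C : ℝ, 0 < C ∧ ∀ m : ℕ, 2 ≤ m → Odd m →
      |((((Finset.Icc (((m : ℤ) + 1) / 2) ((m : ℤ) - 1)) ×ˢ
          (Finset.Icc (((m : ℤ) + 1) / 2) ((m : ℤ) - 1)) ×ˢ
          (Finset.Icc (((m : ℤ) + 1) / 2) ((m : ℤ) - 1)) ×ˢ
          (Finset.Icc (((m : ℤ) + 1) / 2) ((m : ℤ) - 1))).filter
            (fun l => 2 * l.2.1 ≡ l.1 + l.2.2.1 [ZMOD m] ∧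
                      3 * l.2.1 ≡ 2 * l.1 + l.2.2.2 [ZMOD m])).card : ℝ)
        - (m : ℝ) ^ 2 / 12| ≤ C * m := by
  refine ⟨1, one_pos, ?_⟩
  intro m hm2 hodd
  obtain ⟨k, hk⟩ := hodd
  have hk1 : 1 ≤ k := by omega
  set N : ℤ := (k : ℤ) with hNdef
  have hN : 1 ≤ N := by rw [hNdef]; exact_mod_cast hk1
  have hm : (m : ℤ) = 2 * N + 1 := by rw [hNdef]; exact_mod_cast hk
  have e1 : ((m : ℤ) + 1) / 2 = N + 1 := by omega
  have e2 : (m : ℤ) - 1 = 2 * N := by omega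
  rw [e1, e2, quad_filter_eq m N hN hm, quad_card_eq m N hN hm]
  obtain ⟨hlo, hhi⟩ := pair_card_bound N hN
  set c : ℤ := ((((Finset.Icc (1 : ℤ) N) ×ˢ (Finset.Icc (1 : ℤ) N)).filter
      (fun p : ℤ × ℤ => (3 : ℤ) ∣ 2 * p.1 + p.2)).card : ℤ) with hc
  have hcR : (((((Finset.Icc (1 : ℤ) N) ×ˢ (Finset.Icc (1 : ℤ) N)).filter
      (fun p : ℤ × ℤ => (3 : ℤ) ∣ 2 * p.1 + p.2)).card : ℝ)) = (c : ℝ) := by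
    rw [hc]; push_cast; ring
  rw [hcR]
  have hloR : (N : ℝ) * ((N : ℝ) - 2) ≤ 3 * (c : ℝ) := by exact_mod_cast hlo
  have hhiR : 3 * (c : ℝ) ≤ (N : ℝ) * ((N : ℝ) + 2) := by exact_mod_cast hhi
  have hmR : (m : ℝ) = 2 * (N : ℝ) + 1 := by exact_mod_cast hm
  have hNR : (1 : ℝ) ≤ (N : ℝ) := by exact_mod_cast hN
  rw [abs_le, hmR]
  constructor <;> nlinarith
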